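/- Let m be a positive even integer. Writing Γ = Γ₀(2)⁺ ⊂ PSL(2,ℝ), the double coset Γ·[[1,0],[0,m]]·Γ₀(2) decomposes as the disjoint union of left cosets Γ·γ over all γ = [[x,y],[0,z]] with xz = m, 0 ≤ y < z, gcd(x,y,z) = 1 and x odd. -/

import Mathlib

noncomputable section

/-- 2×2 real matrices. -/
abbrev M2R := Matrix (Fin 2) (Fin 2) ℝ

/-- `A` represents an element of `Γ₀(2) ⊆ PSL(2,ℝ)`: it is an integral matrix of
determinant 1 whose lower-left entry is even. -/
def IsGamma0Two (A : M2R) : Prop :=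
  ∃ B : Matrix (Fin 2) (Fin 2) ℤ, A = B.map (fun x => (x : ℝ)) ∧ B.det = 1 ∧ (2 : ℤ) ∣ B 1 0

/-- The Fricke involution `w₂ = 2^{-1/2}·[[0,-1],[2,0]]`. -/
def w2mat : M2R := (Real.sqrt 2)⁻¹ • !![0, -1; 2, 0]

/-- `A` represents an element of `Γ₀(2)⁺`, the extension of `Γ₀(2)` by the Fricke
involution `w₂` (note that `-B ∈ Γ₀(2)` whenever `B ∈ Γ₀(2)`, so signs are absorbed). -/
def IsGamma0TwoPlus (A : M2R) : Prop :=
  IsGamma0Two A ∨ ∃ B : M2R, IsGamma0Two B ∧ A = B * w2mat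

/-- Equality of matrices up to a positive real scalar (equality in `PGL(2,ℝ)⁺`). -/
def projEq (A B : M2R) : Prop := ∃ c : ℝ, 0 < c ∧ A = c • B

/-- The set `M₁^m` of matrices `[[x,y],[0,z]]` with `xz = m`, `0 ≤ y < z`,
`gcd(x,y,z) = 1` and `x` odd. -/
def M1Set (m : ℕ) : Set M2R :=
  {A | ∃ x y z : ℕ, x * z = m ∧ y < z ∧ Nat.gcd (Nat.gcd x y) z = 1 ∧ Odd x ∧
    A = !![(x : ℝ), (y : ℝ); 0, (z : ℝ)]}

abbrev M2Z := Matrix (Fin 2) (Fin 2) ℤ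

def mz (B : M2Z) : M2R := B.map (fun x => (x : ℝ))

lemma mz_mul (B C : M2Z) : mz (B * C) = mz B * mz C := by
  have h : (fun x : ℤ => (x : ℝ)) = ⇑(Int.castRingHom ℝ) := rfl
  simp only [mz, h, Matrix.map_mul]

lemma mz_inj {B C : M2Z} (h : mz B = mz C) : B = C := by
  ext i j
  have := congrFun (congrFun h i) j
  simpa [mz, Matrix.map_apply] using this

lemma mz_fin (a b c d : ℤ) : mz !![a, b; c, d] = !![(a:ℝ), b; c, d] := by
  ext i j
  fin_cases i <;> fin_cases j <;> simp [mz]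

lemma mz_det (B : M2Z) : (mz B).det = (B.det : ℝ) := by
  rw [mz]
  exact ((Int.castRingHom ℝ).map_det B).symm

lemma mzNat (x y z : ℕ) :
    !![(x:ℝ), (y:ℝ); 0, (z:ℝ)] = mz !![(x:ℤ), (y:ℤ); 0, (z:ℤ)] := by
  rw [mz_fin]; push_cast; rfl

lemma projEq_eq {A B : M2R} (h : projEq A B) (hd : A.det = B.det) (hB : B.det ≠ 0) : A = B := by
  obtain ⟨c, hc, rfl⟩ := h
  rw [Matrix.det_smul] at hd
  have hcard : Fintype.card (Fin 2) = 2 := by simp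
  rw [hcard] at hd
  have hc2 : (c^2 - 1) * B.det = 0 := by ring_nf; linarith
  have hc2' : c^2 = 1 := by
    rcases mul_eq_zero.mp hc2 with h | h
    · linarith
    · exact absurd h hB
  have hc1 : c = 1 := by nlinarith
  rw [hc1, one_smul]

lemma det_w2mat : w2mat.det = 1 := by
  rw [w2mat, Matrix.det_smul]
  have h2 : ((Real.sqrt 2)⁻¹) ^ Fintype.card (Fin 2) = 1/2 := by
    simp only [Fintype.card_fin]
    rw [inv_pow, Real.sq_sqrt (by norm_num : (2:ℝ) ≥ 0)]
    norm_num
  rw [h2, Matrix.det_fin_two]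
  norm_num

lemma w2_conj (a b c₀ d : ℤ) :
    w2mat * mz !![a, b; 2*c₀, d] = mz !![d, -c₀; -2*b, a] * w2mat := by
  rw [w2mat, Matrix.mul_smul, Matrix.smul_mul]
  congr 1
  rw [mz_fin, mz_fin, Matrix.mul_fin_two, Matrix.mul_fin_two]
  ext i j
  fin_cases i <;> fin_cases j <;> simp <;> push_cast <;> ring

lemma isGamma0Two_mul {A B : M2R} (hA : IsGamma0Two A) (hB : IsGamma0Two B) :
    IsGamma0Two (A * B) := by
  obtain ⟨C, rfl, hC, hC10⟩ := hA
  obtain ⟨D, rfl, hD, hD10⟩ := hB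
  refine ⟨C * D, (mz_mul C D).symm, by rw [Matrix.det_mul, hC, hD, one_mul], ?_⟩
  have h : (C * D) 1 0 = C 1 0 * D 0 0 + C 1 1 * D 1 0 := by
    rw [Matrix.mul_apply, Fin.sum_univ_two]
  rw [h]
  exact dvd_add (Dvd.dvd.mul_right hC10 _) (Dvd.dvd.mul_left hD10 _)

lemma plus_mul {A B : M2R} (hA : IsGamma0TwoPlus A) (hB : IsGamma0Two B) :
    IsGamma0TwoPlus (A * B) := by
  rcases hA with hA | ⟨A₀, hA₀, rfl⟩
  · exact Or.inl (isGamma0Two_mul hA hB)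
  · right
    obtain ⟨D, rfl, hD, c₀, hc₀⟩ := hB
    have hDe : (D.map (fun x : ℤ => (x:ℝ))) = mz !![D 0 0, D 0 1; 2*c₀, D 1 1] := by
      rw [show (!![D 0 0, D 0 1; 2*c₀, D 1 1]) = D from by rw [← hc₀]; exact (Matrix.eta_fin_two D).symm]
      rfl
    refine ⟨A₀ * mz !![D 1 1, -c₀; -2 * D 0 1, D 0 0], ?_, ?_⟩
    · apply isGamma0Two_mul hA₀
      refine ⟨_, rfl, ?_, ?_⟩
      · rw [Matrix.det_fin_two_of]
        have hDet := hD
        rw [Matrix.det_fin_two, hc₀] at hDet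
        linear_combination hDet
      · have h10 : (!![D 1 1, -c₀; -2 * D 0 1, D 0 0]) 1 0 = -2 * D 0 1 := by simp
        rw [h10]
        exact ⟨-(D 0 1), by ring⟩
    · rw [mul_assoc, hDe, w2_conj, ← mul_assoc]

lemma key1 (a b n : ℕ) (hn : n ≠ 0) (h : Nat.gcd (Nat.gcd a b) n = 1) (hb : 2 ∣ b) :
    ∃ p : ℕ, ¬ 2 ∣ p ∧ Nat.Coprime (p * a + b) n := by
  classical
  set S := n.primeFactors.filter (fun q => ¬ q ∣ b) with hS
  have hSprime : ∀ q ∈ S, Nat.Prime q := fun q hq =>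
    (Nat.mem_primeFactors.mp (Finset.mem_filter.mp hq).1).1
  have hdvd_mem : ∀ q : ℕ, Nat.Prime q → q ∣ S.prod id → q ∈ S := by
    intro q hq hdq
    obtain ⟨r, hr, hqr⟩ := (hq.prime.dvd_finset_prod_iff id).mp hdq
    rwa [(Nat.prime_dvd_prime_iff_eq hq (hSprime r hr)).mp hqr]
  refine ⟨S.prod id, ?_, ?_⟩
  · intro h2
    exact (Finset.mem_filter.mp (hdvd_mem 2 Nat.prime_two h2)).2 hb
  · rw [Nat.coprime_iff_gcd_eq_one]
    by_contra hne
    obtain ⟨q, hq, hqd⟩ := Nat.exists_prime_and_dvd hne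
    have hqn : q ∣ n := hqd.trans (Nat.gcd_dvd_right _ _)
    have hqab : q ∣ S.prod id * a + b := hqd.trans (Nat.gcd_dvd_left _ _)
    by_cases hqb : q ∣ b
    · have hqa : ¬ q ∣ a := by
        intro hqa
        have h1 : q ∣ 1 := h ▸ Nat.dvd_gcd (Nat.dvd_gcd hqa hqb) hqn
        exact hq.one_lt.ne' (Nat.dvd_one.mp h1)
      have hqp : ¬ q ∣ S.prod id := by
        intro hqp
        exact (Finset.mem_filter.mp (hdvd_mem q hq hqp)).2 hqb
      have hqpa : q ∣ S.prod id * a := (Nat.dvd_add_iff_left hqb).mpr hqab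
      rcases (Nat.Prime.dvd_mul hq).mp hqpa with h' | h'
      · exact hqp h'
      · exact hqa h'
    · have hqmem : q ∈ S := Finset.mem_filter.mpr
        ⟨Nat.mem_primeFactors.mpr ⟨hq, hqn, hn⟩, hqb⟩
      have hqp : q ∣ S.prod id * a := (Finset.dvd_prod_of_mem id hqmem).mul_right a
      exact hqb ((Nat.dvd_add_iff_right hqp).mpr hqab)

lemma key2 (m : ℕ) (hm : 0 < m) (a b c d : ℤ) (hdet : a * d - b * c = 1) (hc : 2 ∣ c) :
    ∃ (U : M2Z) (x y z : ℕ), U.det = 1 ∧ 2 ∣ U 1 0 ∧ x * z = m ∧ y < z ∧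
      Nat.gcd (Nat.gcd x y) z = 1 ∧ Odd x ∧
      U * !![(x:ℤ), (y:ℤ); 0, (z:ℤ)] = !![a, b; (m:ℤ) * c, (m:ℤ) * d] := by
  -- a is odd
  obtain ⟨c₁, hc₁⟩ := hc
  have hodd : Odd (a * d) := ⟨b * c₁, by rw [hc₁] at hdet; linarith⟩
  have ha : Odd a := (Int.odd_mul.mp hodd).1
  have ha0 : a ≠ 0 := by
    rintro rfl
    obtain ⟨k, hk⟩ := ha
    omega
  set mc : ℤ := (m:ℤ) * c with hmc
  set x₀ : ℕ := Int.gcd a mc with hx₀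
  have hx₀pos : 0 < x₀ := Int.gcd_pos_iff.mpr (Or.inl ha0)
  obtain ⟨a', ha'⟩ : ((x₀:ℤ)) ∣ a := Int.gcd_dvd_left a mc
  obtain ⟨c', hc'⟩ : ((x₀:ℤ)) ∣ mc := Int.gcd_dvd_right a mc
  set α := Int.gcdA a mc with hα
  set β := Int.gcdB a mc with hβ
  have hbez : (x₀:ℤ) = a * α + mc * β := Int.gcd_eq_gcd_ab a mc
  have hx₀ne : (x₀:ℤ) ≠ 0 := Int.natCast_ne_zero.mpr hx₀pos.ne'
  have hbez' : α * a' + β * c' = 1 := by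
    have h1 : (x₀:ℤ) * (α * a' + β * c') = (x₀:ℤ) * 1 := by
      rw [mul_one]
      calc (x₀:ℤ) * (α * a' + β * c') = a * α + mc * β := by rw [ha', hc']; ring
      _ = (x₀:ℤ) := hbez.symm
    exact mul_left_cancel₀ hx₀ne h1
  set y₀ : ℤ := α * b + β * ((m:ℤ) * d) with hy₀
  set z₀ : ℤ := -c' * b + a' * ((m:ℤ) * d) with hz₀
  have hxz : (x₀:ℤ) * z₀ = (m:ℤ) := by
    have : (x₀:ℤ) * z₀ = -(mc) * b + a * ((m:ℤ) * d) := by rw [hz₀, ha', hc']; ring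
    rw [this, hmc]
    linear_combination (m:ℤ) * hdet
  have hz₀pos : 0 < z₀ := by
    rcases lt_trichotomy z₀ 0 with h | h | h
    · nlinarith [Int.natCast_pos.mpr hx₀pos, Int.natCast_pos.mpr hm]
    · rw [h, mul_zero] at hxz; exact absurd hxz.symm (Int.natCast_ne_zero.mpr hm.ne')
    · exact h
  set t : ℤ := y₀ / z₀ with ht
  set y₁ : ℤ := y₀ % z₀ with hy₁
  have hy₁nonneg : 0 ≤ y₁ := Int.emod_nonneg y₀ hz₀pos.ne'
  have hy₁lt : y₁ < z₀ := Int.emod_lt_of_pos y₀ hz₀pos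
  have hsplit : y₀ = z₀ * t + y₁ := (Int.mul_ediv_add_emod y₀ z₀).symm
  set U : M2Z := !![a', a' * t - β; c', c' * t + α] with hU
  -- oddness of x₀
  have hx₀odd : ¬ (2:ℤ) ∣ (x₀:ℤ) := by
    intro h2
    have h2a : (2:ℤ) ∣ a := h2.trans ⟨a', ha'⟩
    obtain ⟨k, hk⟩ := h2a
    obtain ⟨j, hj⟩ := ha
    omega
  have hc'even : (2:ℤ) ∣ c' := by
    have h2mc : (2:ℤ) ∣ (x₀:ℤ) * c' := by rw [← hc', hmc, hc₁]; exact ⟨(m:ℤ) * c₁, by ring⟩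
    rcases (Int.prime_two.dvd_mul).mp h2mc with h | h
    · exact absurd h hx₀odd
    · exact h
  refine ⟨U, x₀, y₁.toNat, z₀.toNat, ?_, ?_, ?_, ?_, ?_, ?_, ?_⟩
  · rw [hU, Matrix.det_fin_two_of]; linear_combination hbez'
  · have : U 1 0 = c' := by rw [hU]; simp
    rw [this]; exact hc'even
  · have : ((x₀ * z₀.toNat : ℕ) : ℤ) = (m:ℤ) := by
      push_cast [Int.toNat_of_nonneg hz₀pos.le]
      exact hxz
    exact_mod_cast this
  · have : (y₁.toNat : ℤ) < (z₀.toNat : ℤ) := by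
      rwa [Int.toNat_of_nonneg hy₁nonneg, Int.toNat_of_nonneg hz₀pos.le]
    exact_mod_cast this
  · -- gcd = 1
    set g := Nat.gcd (Nat.gcd x₀ y₁.toNat) z₀.toNat with hg
    have hgx : (g:ℤ) ∣ (x₀:ℤ) := Int.natCast_dvd_natCast.mpr ((Nat.gcd_dvd_left _ _).trans (Nat.gcd_dvd_left _ _))
    have hgy : (g:ℤ) ∣ y₁ := by
      rw [← Int.toNat_of_nonneg hy₁nonneg]
      exact Int.natCast_dvd_natCast.mpr ((Nat.gcd_dvd_left _ _).trans (Nat.gcd_dvd_right _ _))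
    have hgz : (g:ℤ) ∣ z₀ := by
      rw [← Int.toNat_of_nonneg hz₀pos.le]
      exact Int.natCast_dvd_natCast.mpr (Nat.gcd_dvd_right _ _)
    have hga : (g:ℤ) ∣ a := hgx.trans ⟨a', ha'⟩
    have hgb : (g:ℤ) ∣ b := by
      have hb : b = a' * y₁ + (a' * t - β) * z₀ := by
        have h1 : a' * y₀ - β * z₀ = b := by
          rw [hy₀, hz₀]
          linear_combination b * hbez'
        rw [← h1, hsplit]; ring
      rw [hb]
      exact dvd_add (hgy.mul_left _) (hgz.mul_left _)
    have hg1 : (g:ℤ) ∣ 1 := by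
      rw [← hdet]
      exact dvd_sub (hga.mul_right d) (hgb.mul_right c)
    exact Nat.dvd_one.mp (Int.ofNat_dvd.mp (by exact_mod_cast hg1))
  · rw [← Nat.not_even_iff_odd]
    intro h2
    exact hx₀odd (Int.natCast_dvd_natCast.mpr h2.two_dvd)
  · -- the matrix identity
    rw [hU]
    have hyy : (y₁.toNat : ℤ) = y₁ := Int.toNat_of_nonneg hy₁nonneg
    have hzz : (z₀.toNat : ℤ) = z₀ := Int.toNat_of_nonneg hz₀pos.le
    have e00 : a' * (x₀:ℤ) + (a' * t - β) * 0 = a := by linear_combination -ha'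
    have e01 : a' * y₁ + (a' * t - β) * z₀ = b := by
      linear_combination (-a') * hsplit + a' * hy₀ + (-β) * hz₀ + b * hbez'
    have e10 : c' * (x₀:ℤ) + (c' * t + α) * 0 = mc := by linear_combination -hc'
    have e11 : c' * y₁ + (c' * t + α) * z₀ = (m:ℤ) * d := by
      linear_combination (-c') * hsplit + c' * hy₀ + α * hz₀ + ((m:ℤ) * d) * hbez'
    rw [hyy, hzz, Matrix.mul_fin_two, e00, e01, e10, e11]

lemma key3 (m x y z : ℕ) (hxz : x * z = m) (hx : Odd x) (hz2 : 2 ∣ z) (hz : 0 < z)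
    (hg : Nat.gcd (Nat.gcd x y) z = 1) :
    ∃ G K : M2Z, G.det = 1 ∧ 2 ∣ G 1 0 ∧ K.det = 1 ∧ 2 ∣ K 1 0 ∧
      !![(x:ℤ), (y:ℤ); 0, (z:ℤ)] = G * !![1, 0; 0, (m:ℤ)] * K := by
  have hx2 : Nat.Coprime 2 x := Nat.coprime_two_left.mpr hx
  have hg2 : Nat.gcd (Nat.gcd x (2 * y)) z = 1 := by
    rwa [Nat.Coprime.gcd_mul_left_cancel_right y hx2]
  obtain ⟨p, hp2, hpcop⟩ := key1 x (2 * y) z hz.ne' hg2 ⟨y, rfl⟩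
  -- p * x + 2 * y is odd
  have hpodd : Odd p := Nat.odd_iff.mpr (by omega)
  have heodd : Odd (p * x + 2 * y) := by
    rcases hpodd with ⟨i, hi⟩; rcases hx with ⟨j, hj⟩
    exact ⟨2*i*j + i + j + y, by rw [hi, hj]; ring⟩
  have hecop2 : Nat.Coprime (p * x + 2 * y) 2 := Nat.coprime_two_right.mpr heodd
  have hecop : Nat.Coprime (p * x + 2 * y) (2 * z) := hecop2.mul_right hpcop
  -- Bezout over ℤ
  set e : ℤ := ((p : ℤ) * x + 2 * y) with he
  have hegcd : Int.gcd e ((2 : ℤ) * z) = 1 := by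
    have h1 : e = ((p * x + 2 * y : ℕ) : ℤ) := by push_cast; ring
    have h2 : ((2:ℤ) * z) = ((2 * z : ℕ) : ℤ) := by push_cast; ring
    rw [h1, h2, Int.gcd_natCast_natCast]
    exact hecop
  obtain ⟨s', q', hbez⟩ : ∃ s' q' : ℤ, e * s' - 2 * (z:ℤ) * q' = 1 := by
    refine ⟨Int.gcdA e ((2:ℤ) * z), -(Int.gcdB e ((2:ℤ) * z)), ?_⟩
    have h := Int.gcd_eq_gcd_ab e ((2:ℤ) * z)
    rw [hegcd] at h
    push_cast at h
    linear_combination -h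
  refine ⟨!![e, q'; 2 * z, s'], !![(x:ℤ) * s', (y:ℤ) * s' - z * q'; -2, p], ?_, ?_, ?_, ?_, ?_⟩
  · rw [Matrix.det_fin_two_of]; linear_combination hbez
  · have : (!![e, q'; 2 * (z:ℤ), s']) 1 0 = 2 * z := by simp
    rw [this]; exact ⟨z, rfl⟩
  · rw [Matrix.det_fin_two_of]
    rw [he] at hbez
    linear_combination hbez
  · have : (!![(x:ℤ) * s', (y:ℤ) * s' - z * q'; -2, p]) 1 0 = -2 := by simp
    rw [this]; exact ⟨-1, by ring⟩
  · have hmz : (m : ℤ) = (x : ℤ) * z := by exact_mod_cast hxz.symm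
    rw [hmz]
    rw [he] at hbez
    ext i j
    fin_cases i <;> fin_cases j <;>
      simp [Matrix.mul_apply, Fin.sum_univ_two]
    · linear_combination (-(x:ℤ)) * hbez
    · linear_combination (-(y:ℤ)) * hbez
    · ring
    · linear_combination (-(z:ℤ)) * hbez

lemma key4 (x y z x' y' z' : ℕ) (hx : 0 < x) (hx' : 0 < x') (hz : 0 < z)
    (hy : y < z) (hy' : y' < z') (B : M2Z) (hdet : B.det = 1)
    (h : B * !![(x:ℤ), y; 0, z] = !![(x':ℤ), y'; 0, z']) :
    x = x' ∧ y = y' ∧ z = z' := by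
  have hent : ∀ i j, (B * !![(x:ℤ), y; 0, z]) i j = (!![(x':ℤ), y'; 0, z']) i j :=
    fun i j => by rw [h]
  have e00 := hent 0 0
  have e01 := hent 0 1
  have e10 := hent 1 0
  have e11 := hent 1 1
  simp [Matrix.mul_apply, Fin.sum_univ_two] at e00 e01 e10 e11
  -- e10 : B 1 0 * x = 0
  have hB10 : B 1 0 = 0 := by
    rcases e10 with h' | h'
    · exact h'
    · omega
  rw [Matrix.det_fin_two, hB10, mul_zero, sub_zero] at hdet
  have hB00 : B 0 0 = 1 := by
    have hxpos : (0:ℤ) < x := by exact_mod_cast hx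
    have hx'pos : (0:ℤ) < x' := by exact_mod_cast hx'
    have hB00pos : 0 < B 0 0 := by nlinarith [e00]
    rcases Int.isUnit_iff.mp (IsUnit.of_mul_eq_one _ hdet) with h' | h'
    · exact h'
    · omega
  have hB11 : B 1 1 = 1 := by rw [hB00, one_mul] at hdet; exact hdet
  rw [hB00, one_mul] at e00 e01
  rw [hB10, hB11, zero_mul, zero_add, one_mul] at e11
  -- e11 : z = z', e00 : x = x'
  have hzz : z = z' := by exact_mod_cast e11
  have hxx : x = x' := by exact_mod_cast e00
  -- e01 : y + B 0 1 * z = y'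
  have hB01 : B 0 1 = 0 := by
    have h1 : (y:ℤ) + B 0 1 * z = y' := e01
    have h2 : (y':ℤ) < z := by rw [hzz]; exact_mod_cast hy'
    have h3 : (y:ℤ) < z := by exact_mod_cast hy
    have h4 : (0:ℤ) ≤ y := Int.natCast_nonneg y
    have h5 : (0:ℤ) ≤ y' := Int.natCast_nonneg y'
    have hzpos : (0:ℤ) < z := by exact_mod_cast hz
    nlinarith [mul_le_mul_of_nonneg_right (Int.add_one_le_iff.mpr
      (show B 0 1 < 1 from by nlinarith)) hzpos.le,
      mul_le_mul_of_nonneg_right (Int.add_one_le_iff.mpr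
      (show (-1:ℤ) < B 0 1 from by nlinarith)) hzpos.le]
  rw [hB01, zero_mul, add_zero] at e01
  exact ⟨hxx, by exact_mod_cast e01, hzz⟩

lemma mzD (m : ℕ) : !![(1:ℝ), 0; 0, (m:ℝ)] = mz !![1, 0; 0, (m:ℤ)] := by
  rw [mz_fin]; norm_num


/-- For `m` even, the double coset `Γ₀(2)⁺·[[1,0],[0,m]]·Γ₀(2)` is the disjoint union
of the left cosets `Γ₀(2)⁺·γ` for `γ ∈ M₁^m` (all equalities of cosets taken in
`PSL(2,ℝ)`, i.e. up to positive scalars). -/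
theorem double_coset_decomposition_M1 (m : ℕ) (hm : 0 < m) (hme : Even m) :
    (∀ A : M2R,
      (∃ g₁ g₂ : M2R, IsGamma0TwoPlus g₁ ∧ IsGamma0Two g₂ ∧
        projEq A (g₁ * !![(1 : ℝ), 0; 0, (m : ℝ)] * g₂))
      ↔ ∃ γ ∈ M1Set m, ∃ g : M2R, IsGamma0TwoPlus g ∧ projEq A (g * γ))
    ∧ ∀ γ ∈ M1Set m, ∀ γ' ∈ M1Set m,
        (∃ g : M2R, IsGamma0TwoPlus g ∧ projEq γ' (g * γ)) → γ = γ' := by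
  constructor
  · intro A
    constructor
    · -- forward
      rintro ⟨g₁, g₂, hg₁, ⟨B, rfl, hdetB, hB10⟩, hproj⟩
      rw [Matrix.det_fin_two] at hdetB
      obtain ⟨U, x, y, z, hU, hU10, hxz, hyz, hgcd, hxodd, hmul⟩ :=
        key2 m hm (B 0 0) (B 0 1) (B 1 0) (B 1 1) hdetB hB10
      have hDBint : !![(1:ℤ), 0; 0, (m:ℤ)] * B = U * !![(x:ℤ), (y:ℤ); 0, (z:ℤ)] := by
        rw [hmul]
        ext i j
        fin_cases i <;> fin_cases j <;> simp [Matrix.mul_apply, Fin.sum_univ_two]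
      have hDB : !![(1:ℝ), 0; 0, (m:ℝ)] * (B.map (fun x : ℤ => (x:ℝ))) =
          mz U * !![(x:ℝ), (y:ℝ); 0, (z:ℝ)] := by
        have h1 : (B.map (fun x : ℤ => (x:ℝ))) = mz B := rfl
        rw [h1, mzD, mzNat, ← mz_mul, ← mz_mul, hDBint]
      refine ⟨!![(x:ℝ), (y:ℝ); 0, (z:ℝ)], ⟨x, y, z, hxz, hyz, hgcd, hxodd, rfl⟩,
        g₁ * mz U, plus_mul hg₁ ⟨U, rfl, hU, hU10⟩, ?_⟩
      obtain ⟨cc, hcc, hA⟩ := hproj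
      refine ⟨cc, hcc, ?_⟩
      rw [hA, mul_assoc, hDB, ← mul_assoc]
    · -- backward
      rintro ⟨γ, ⟨x, y, z, hxz, hyz, hgcd, hxodd, rfl⟩, g, hg, hproj⟩
      have hzne : z ≠ 0 := by rintro rfl; rw [Nat.mul_zero] at hxz; omega
      have h2m : 2 ∣ x * z := by rw [hxz]; exact hme.two_dvd
      have hz2 : 2 ∣ z := by
        have hx2 : Nat.Coprime 2 x := Nat.coprime_two_left.mpr hxodd
        exact hx2.dvd_of_dvd_mul_left h2m
      obtain ⟨G, K, hGdet, hG10, hKdet, hK10, heq⟩ :=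
        key3 m x y z hxz hxodd hz2 (Nat.pos_of_ne_zero hzne) hgcd
      have hreal : !![(x:ℝ), (y:ℝ); 0, (z:ℝ)] = mz G * !![(1:ℝ), 0; 0, (m:ℝ)] * mz K := by
        rw [mzD, mzNat, ← mz_mul, ← mz_mul, heq]
      refine ⟨g * mz G, mz K, plus_mul hg ⟨G, rfl, hGdet, hG10⟩, ⟨K, rfl, hKdet, hK10⟩, ?_⟩
      obtain ⟨cc, hcc, hA⟩ := hproj
      refine ⟨cc, hcc, ?_⟩
      rw [hA, hreal, ← mul_assoc, ← mul_assoc]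
  · -- disjointness
    rintro γ ⟨x, y, z, hxz, hyz, hgcd, hxodd, rfl⟩ γ'
      ⟨x', y', z', hxz', hyz', hgcd', hxodd', rfl⟩ ⟨g, hg, hproj⟩
    have hxne : x ≠ 0 := by rintro rfl; rw [Nat.odd_iff] at hxodd; omega
    have hxne' : x' ≠ 0 := by rintro rfl; rw [Nat.odd_iff] at hxodd'; omega
    have hzne : z ≠ 0 := by rintro rfl; rw [Nat.mul_zero] at hxz; omega
    have hdetγ : (!![(x:ℝ), (y:ℝ); 0, (z:ℝ)]).det = (m:ℝ) := by
      rw [Matrix.det_fin_two_of]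
      push_cast [← hxz]; ring
    have hdetγ' : (!![(x':ℝ), (y':ℝ); 0, (z':ℝ)]).det = (m:ℝ) := by
      rw [Matrix.det_fin_two_of]
      push_cast [← hxz']; ring
    have hmne : (m:ℝ) ≠ 0 := by exact_mod_cast hm.ne'
    rcases hg with ⟨B, rfl, hBdet, hB10⟩ | ⟨B₀, ⟨C, rfl, hCdet, hC10⟩, rfl⟩
    · -- g integral
      have hdetg : ((B.map (fun x : ℤ => (x:ℝ))) * !![(x:ℝ), (y:ℝ); 0, (z:ℝ)]).det = (m:ℝ) := by
        rw [Matrix.det_mul, hdetγ]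
        have : (B.map (fun x : ℤ => (x:ℝ))).det = ((B.det : ℤ) : ℝ) := mz_det B
        rw [this, hBdet]; norm_num
      have heqr := projEq_eq hproj (by rw [hdetγ', hdetg]) (by rw [hdetg]; exact hmne)
      have hint : B * !![(x:ℤ), (y:ℤ); 0, (z:ℤ)] = !![(x':ℤ), (y':ℤ); 0, (z':ℤ)] := by
        apply mz_inj
        rw [mz_mul, ← mzNat, ← mzNat]
        exact heqr.symm
      obtain ⟨h1, h2, h3⟩ := key4 x y z x' y' z' (Nat.pos_of_ne_zero hxne)
        (Nat.pos_of_ne_zero hxne') (Nat.pos_of_ne_zero hzne) hyz hyz' B hBdet hint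
      rw [h1, h2, h3]
    · -- g in the Fricke coset : contradiction
      exfalso
      have hdetg : (((C.map (fun x : ℤ => (x:ℝ))) * w2mat) * !![(x:ℝ), (y:ℝ); 0, (z:ℝ)]).det
          = (m:ℝ) := by
        rw [Matrix.det_mul, Matrix.det_mul, hdetγ, det_w2mat]
        have : (C.map (fun x : ℤ => (x:ℝ))).det = ((C.det : ℤ) : ℝ) := mz_det C
        rw [this, hCdet]; norm_num
      have heqr := projEq_eq hproj (by rw [hdetγ', hdetg]) (by rw [hdetg]; exact hmne)
      have hW : !![(0:ℝ), -1; 2, 0] = mz !![0, -1; 2, 0] := by rw [mz_fin]; norm_num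
      set N : ℤ := ((C * !![0, -1; 2, 0] * !![(x:ℤ), (y:ℤ); 0, (z:ℤ)] : M2Z)) 0 0 with hN
      have hsmul : !![(x':ℝ), (y':ℝ); 0, (z':ℝ)] =
          (Real.sqrt 2)⁻¹ • mz (C * !![0, -1; 2, 0] * !![(x:ℤ), (y:ℤ); 0, (z:ℤ)]) := by
        have hCm : (C.map (fun x : ℤ => (x:ℝ))) = mz C := rfl
        rw [heqr, w2mat, hW, Matrix.mul_smul, Matrix.smul_mul, mzNat, hCm, ← mz_mul, ← mz_mul]
      have hent := congrFun (congrFun hsmul 0) 0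
      have hentN : (x':ℝ) = (Real.sqrt 2)⁻¹ * (N:ℝ) := by
        simpa [mz, Matrix.map_apply, Matrix.smul_apply, ← hN] using hent
      have hsq : Real.sqrt 2 = (N:ℝ) / (x':ℝ) := by
        have hx'r : (x':ℝ) ≠ 0 := by exact_mod_cast hxne'
        have h2pos : (0:ℝ) < Real.sqrt 2 := Real.sqrt_pos.mpr (by norm_num)
        field_simp at hentN ⊢
        linarith [hentN]
      apply Rat.not_irrational ((N:ℚ) / (x':ℚ))
      have hc : (((N:ℚ) / (x':ℚ) : ℚ) : ℝ) = (N:ℝ) / (x':ℝ) := by push_cast; ring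
      rw [hc, ← hsq]
      exact irrational_sqrt_two
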